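/- For every γ with 0 ≤ γ < 1, every a with 0 ≤ a ≤ 1, and every r with 0 ≤ r ≤ (1+γ)/(3+γ), one has a + ((1-a²)/(1+γ))·(r/(1-r)) + (1/(1+a) + r/(1-r))·((1-a²)/(1+γ))²·(r²/(1-r²)) ≤ 1. -/

import Mathlib

/-- For `0 ≤ γ < 1`, `0 ≤ a ≤ 1` and `0 ≤ r ≤ (1+γ)/(3+γ)`,
`a + ((1-a²)/(1+γ))·r/(1-r) + (1/(1+a) + r/(1-r))·((1-a²)/(1+γ))²·r²/(1-r²) ≤ 1`. -/
theorem u_le_one (γ : ℝ) (hγ₀ : 0 ≤ γ) (hγ₁ : γ < 1)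
    (a : ℝ) (ha₀ : 0 ≤ a) (ha₁ : a ≤ 1)
    (r : ℝ) (hr₀ : 0 ≤ r) (hr₁ : r ≤ (1 + γ) / (3 + γ)) :
    a + ((1 - a ^ 2) / (1 + γ)) * (r / (1 - r))
      + (1 / (1 + a) + r / (1 - r)) * ((1 - a ^ 2) / (1 + γ)) ^ 2 * (r ^ 2 / (1 - r ^ 2))
      ≤ 1 := by
  have hG : (0:ℝ) < 1 + γ := by linarith
  have h3 : (0:ℝ) < 3 + γ := by linarith
  have hrlt : r < 1 := lt_of_le_of_lt hr₁ (by rw [div_lt_one h3]; linarith)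
  have h1r : (0:ℝ) < 1 - r := by linarith
  have h1pr : (0:ℝ) < 1 + r := by linarith
  have hA : (0:ℝ) < 1 + a := by linarith
  have ha2 : 0 ≤ 1 - a ^ 2 := by nlinarith
  have hkey : r * (3 + γ) ≤ 1 + γ := (le_div_iff₀ h3).mp hr₁
  set x : ℝ := (1 - a ^ 2) / (1 + γ) * (r / (1 - r)) with hxdef
  have hx0 : 0 ≤ x :=
    mul_nonneg (div_nonneg ha2 hG.le) (div_nonneg hr₀ h1r.le)
  have hxmul : x * ((1 + γ) * (1 - r)) = (1 - a ^ 2) * r := by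
    field_simp [hxdef]
    rw [hxdef, div_mul_div_comm, div_mul_eq_mul_div, div_mul_eq_mul_div,
      div_eq_iff (mul_pos hG h1r).ne']
    ring
  have hx : 2 * x ≤ 1 - a ^ 2 := by
    have h2 : 2 * r ≤ (1 + γ) * (1 - r) := by nlinarith
    nlinarith [mul_le_mul_of_nonneg_left h2 ha2, hxmul, mul_pos hG h1r]
  have heq : a + ((1 - a ^ 2) / (1 + γ)) * (r / (1 - r))
      + (1 / (1 + a) + r / (1 - r)) * ((1 - a ^ 2) / (1 + γ)) ^ 2 * (r ^ 2 / (1 - r ^ 2))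
      = a + x + x ^ 2 * (1 + a * r) / ((1 + a) * (1 + r)) := by
    have h1 : (1:ℝ) - r ^ 2 = (1 - r) * (1 + r) := by ring
    rw [hxdef, h1]
    field_simp
    ring
  rw [heq]
  have hT : x ^ 2 * (1 + a * r) / ((1 + a) * (1 + r)) ≤ x ^ 2 / (1 + a) := by
    rw [div_le_div_iff₀ (by positivity) hA]
    nlinarith [mul_nonneg (mul_nonneg (sq_nonneg x) hA.le)
      (mul_nonneg (by linarith : (0:ℝ) ≤ 1 - a) hr₀)]
  have hdiv : x ^ 2 / (1 + a) ≤ x * (1 - a) / 2 := by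
    rw [div_le_div_iff₀ hA (by norm_num : (0:ℝ) < 2)]
    nlinarith [mul_le_mul_of_nonneg_left hx hx0]
  have hfin : a + x + x * (1 - a) / 2 ≤ 1 := by
    nlinarith [mul_le_mul_of_nonneg_right hx (by linarith : (0:ℝ) ≤ 3 - a),
      mul_nonneg (mul_nonneg (by linarith : (0:ℝ) ≤ 1 - a) (by linarith : (0:ℝ) ≤ 1 - a))
        (by linarith : (0:ℝ) ≤ 1 - a)]
  linarith
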